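/- arXiv:math/9908159 — 3 statements merged into one kernel-verified Lean document; each statement's English description precedes it below -/
import Mathlib

section
/- Assume λ is a strong limit singular cardinal of cofinality σ, κ is a regular cardinal, and σ < κ < λ. Then there exists a stationary subset S of [λ]^{<κ} such that every unbounded subset of S is stationary. -/
open Cardinal Set

noncomputable section

/-- A finitary function on the ordinals: an arity `n` together with an
`n`-ary function on ordinals. -/
abbrev FinFun := Σ n : ℕ, (Fin n → Ordinal.{0}) → Ordinal.{0}

/-- `[λ]^{<κ}`: the collection of subsets of `λ` (viewed as the set of
ordinals `< λ`) of cardinality `< κ`. -/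
def smallSubsets (lam kap : Cardinal.{0}) : Set (Set Ordinal.{0}) :=
  {a | (∀ x ∈ a, x < lam.ord) ∧ Cardinal.mk ↥a < Cardinal.lift.{1} kap}

/-- The countable family `F` consists of finitary functions *on `λ`*. -/
def FamOn (lam : Cardinal.{0}) (F : Set FinFun) : Prop :=
  ∀ f ∈ F, ∀ x : Fin f.1 → Ordinal.{0}, (∀ i, x i < lam.ord) → f.2 x < lam.ord

/-- The club `C_F` of `[λ]^{<κ}` associated to a family `F` of finitary
functions on `λ`: the members `a` of `[λ]^{<κ}` closed under every function
of `F` and such that `a ∩ κ` is an ordinal (an initial segment of `κ`). -/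
def clubOf (lam kap : Cardinal.{0}) (F : Set FinFun) : Set (Set Ordinal.{0}) :=
  {a | a ∈ smallSubsets lam kap ∧
    (∀ f ∈ F, ∀ x : Fin f.1 → Ordinal.{0}, (∀ i, x i ∈ a) → f.2 x ∈ a) ∧
    ∃ β < kap.ord, a ∩ Set.Iio kap.ord = Set.Iio β}

/-- `C` is a club of `[λ]^{<κ}`. -/
def IsClubPkl (lam kap : Cardinal.{0}) (C : Set (Set Ordinal.{0})) : Prop :=
  ∃ F : Set FinFun, F.Countable ∧ FamOn lam F ∧ C = clubOf lam kap F

/-- `S` is a stationary subset of `[λ]^{<κ}`: it meets every club. -/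
def IsStationaryPkl (lam kap : Cardinal.{0}) (S : Set (Set Ordinal.{0})) : Prop :=
  ∀ C, IsClubPkl lam kap C → (S ∩ C).Nonempty

/-- `S` is an unbounded subset of `[λ]^{<κ}`: every member of `[λ]^{<κ}`
is contained in some member of `S`. -/
def IsUnbounded (lam kap : Cardinal.{0}) (S : Set (Set Ordinal.{0})) : Prop :=
  ∀ b ∈ smallSubsets lam kap, ∃ a ∈ S, b ⊆ a

/-- The club filter `E_{λ,κ}`: the filter generated by the clubs of
`[λ]^{<κ}`. -/
def clubFilter (lam kap : Cardinal.{0}) : Filter (Set Ordinal.{0}) :=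
  Filter.generate {C | IsClubPkl lam kap C}

lemma exists_code (lam : Cardinal.{0}) (hsl : lam.IsStrongLimit) (hω : ℵ₀ < lam) :
    ∃ E : Ordinal.{0} → (n : ℕ) → (Fin n → Ordinal.{0}) → Ordinal.{0},
      (∀ γ n x, E γ n x < lam.ord) ∧
      (∀ (n : ℕ) (δ δ' : Ordinal.{0}), δ < lam.ord → δ' < lam.ord → 0 < δ' →
        ∀ g : (Fin n → Ordinal.{0}) → Ordinal.{0}, (∀ x, (∀ i, x i < δ) → g x < δ') →
        ∃ γ, γ < lam.ord ∧ ∀ x : Fin n → Ordinal.{0}, (∀ i, x i < δ) → E γ n x = g x) := by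
  have hlamω : ℵ₀ ≤ lam := hsl.aleph0_le
  have hlim : Order.IsSuccLimit lam.ord := Cardinal.isSuccLimit_ord hlamω
  have hzo : (0 : Ordinal) < lam.ord := by
    rw [Cardinal.lt_ord]; simpa using hsl.ne_zero.bot_lt
  have hone : (1 : Ordinal) < lam.ord := by
    rw [Cardinal.lt_ord]; simpa using hω.trans_le' (by simp)
  have hpow : ∀ c : Cardinal.{0}, ℵ₀ ≤ c →
      (Cardinal.lift.{1} c) ^ (Cardinal.lift.{1} c) ≤ Cardinal.lift.{1} (2 ^ c) := by
    intro c hc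
    calc (Cardinal.lift.{1} c) ^ (Cardinal.lift.{1} c)
        ≤ (2 ^ Cardinal.lift.{1} c) ^ (Cardinal.lift.{1} c) :=
          Cardinal.power_le_power_right (Cardinal.cantor _).le
      _ = 2 ^ (Cardinal.lift.{1} c * Cardinal.lift.{1} c) := Cardinal.power_mul.symm
      _ = 2 ^ Cardinal.lift.{1} c := by
          rw [Cardinal.mul_eq_self (Cardinal.aleph0_le_lift.mpr hc)]
      _ = Cardinal.lift.{1} (2 ^ c) := (Cardinal.lift_two_power c).symm
  have hboth : ∀ (c : Cardinal.{0}) (a b : Cardinal.{1}), ℵ₀ ≤ c →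
      a ≤ Cardinal.lift.{1} c → b ≤ Cardinal.lift.{1} c →
      b ^ a ≤ Cardinal.lift.{1} (2 ^ c) := by
    intro c a b hc ha hb
    have hne : Cardinal.lift.{1} c ≠ 0 :=
      (Cardinal.aleph0_pos.trans_le (Cardinal.aleph0_le_lift.mpr hc)).ne'
    calc b ^ a ≤ (Cardinal.lift.{1} c) ^ a := Cardinal.power_le_power_right hb
      _ ≤ (Cardinal.lift.{1} c) ^ (Cardinal.lift.{1} c) :=
          Cardinal.power_le_power_left hne ha
      _ ≤ Cardinal.lift.{1} (2 ^ c) := hpow c hc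
  -- cardinality bound for each piece
  have key : ∀ δ δ' : (Set.Iio lam.ord),
      #((ℕ → (Set.Iic δ.1)) → (Set.Iio δ'.1)) ≤ Cardinal.lift.{1} lam := by
    intro δ δ'
    set ν : Cardinal.{0} := max (max (δ.1 + 1).card δ'.1.card) ℵ₀ with hν
    have hnl : ν < lam := by
      have h1 : (δ.1 + 1).card < lam := by
        rw [← Cardinal.lt_ord, Ordinal.add_one_eq_succ]
        exact hlim.succ_lt δ.2
      have h2 : δ'.1.card < lam := Cardinal.lt_ord.mp δ'.2
      exact max_lt (max_lt h1 h2) hω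
    have hno : ℵ₀ ≤ ν := le_max_right _ _
    have hIic : #(Set.Iic δ.1) ≤ Cardinal.lift.{1} ν := by
      have h4 : (Set.Iic δ.1) = Set.Iio (δ.1 + 1) := by
        ext z; simp only [Set.mem_Iic, Set.mem_Iio, Ordinal.add_one_eq_succ, Order.lt_succ_iff]
      rw [h4, Ordinal.mk_Iio_ordinal]
      exact Cardinal.lift_le.mpr ((le_max_left _ _).trans (le_max_left _ _))
    have hIio : #(Set.Iio δ'.1) ≤ Cardinal.lift.{1} ν := by
      rw [Ordinal.mk_Iio_ordinal]
      exact Cardinal.lift_le.mpr ((le_max_right _ _).trans (le_max_left _ _))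
    have hdom : #(ℕ → (Set.Iic δ.1)) ≤ Cardinal.lift.{1} (2 ^ ν) := by
      rw [Cardinal.mk_arrow, Cardinal.lift_id']
      apply hboth ν _ _ hno _ hIic
      rw [Cardinal.mk_nat, Cardinal.lift_aleph0]
      exact Cardinal.aleph0_le_lift.mpr hno
    have h2no : ℵ₀ ≤ 2 ^ ν := hno.trans (Cardinal.cantor ν).le
    have h2nl : 2 ^ ν < lam := hsl.two_power_lt hnl
    have hIio' : #(Set.Iio δ'.1) ≤ Cardinal.lift.{1} (2 ^ ν) :=
      hIio.trans (Cardinal.lift_le.mpr ((Cardinal.cantor ν).le))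
    calc #((ℕ → (Set.Iic δ.1)) → (Set.Iio δ'.1))
        = #(Set.Iio δ'.1) ^ #(ℕ → (Set.Iic δ.1)) :=
          (Cardinal.power_def _ _).symm
      _ ≤ Cardinal.lift.{1} (2 ^ (2 ^ ν)) := hboth _ _ _ h2no hdom hIio'
      _ ≤ Cardinal.lift.{1} lam := Cardinal.lift_le.mpr (hsl.two_power_lt h2nl).le
  -- total cardinality of the coding type
  have hQcard : #((δ : (Set.Iio lam.ord)) × (δ' : (Set.Iio lam.ord)) ×
      ((ℕ → (Set.Iic δ.1)) → (Set.Iio δ'.1))) ≤ #(Set.Iio lam.ord) := by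
    have hIL : #(Set.Iio lam.ord) = Cardinal.lift.{1} lam := by
      rw [Ordinal.mk_Iio_ordinal, Cardinal.card_ord]
    rw [hIL]
    have hll : Cardinal.lift.{1} lam * Cardinal.lift.{1} lam = Cardinal.lift.{1} lam :=
      Cardinal.mul_eq_self (Cardinal.aleph0_le_lift.mpr hlamω)
    calc #((δ : (Set.Iio lam.ord)) × (δ' : (Set.Iio lam.ord)) ×
          ((ℕ → (Set.Iic δ.1)) → (Set.Iio δ'.1)))
        = Cardinal.sum fun δ : (Set.Iio lam.ord) =>
            #((δ' : (Set.Iio lam.ord)) × ((ℕ → (Set.Iic δ.1)) → (Set.Iio δ'.1))) :=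
          Cardinal.mk_sigma _
      _ ≤ Cardinal.sum fun _ : (Set.Iio lam.ord) => Cardinal.lift.{1} lam := by
          apply Cardinal.sum_le_sum
          intro δ
          calc #((δ' : (Set.Iio lam.ord)) × ((ℕ → (Set.Iic δ.1)) → (Set.Iio δ'.1)))
              = Cardinal.sum fun δ' : (Set.Iio lam.ord) =>
                  #((ℕ → (Set.Iic δ.1)) → (Set.Iio δ'.1)) := Cardinal.mk_sigma _
            _ ≤ Cardinal.sum fun _ : (Set.Iio lam.ord) => Cardinal.lift.{1} lam :=
                Cardinal.sum_le_sum _ _ (fun δ' => key δ δ')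
            _ = #(Set.Iio lam.ord) * Cardinal.lift.{1} lam := Cardinal.sum_const' _ _
            _ = Cardinal.lift.{1} lam := by rw [hIL, hll]
      _ = #(Set.Iio lam.ord) * Cardinal.lift.{1} lam := Cardinal.sum_const' _ _
      _ = Cardinal.lift.{1} lam := by rw [hIL, hll]
  obtain ⟨emb⟩ := Cardinal.le_def _ _ |>.mp hQcard
  have hQne : Nonempty ((δ : (Set.Iio lam.ord)) × (δ' : (Set.Iio lam.ord)) ×
      ((ℕ → (Set.Iic δ.1)) → (Set.Iio δ'.1))) :=
    ⟨⟨⟨1, hone⟩, ⟨1, hone⟩, fun _ => ⟨0, by simp⟩⟩⟩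
  -- decoding
  set dec : ((δ : (Set.Iio lam.ord)) × (δ' : (Set.Iio lam.ord)) ×
      ((ℕ → (Set.Iic δ.1)) → (Set.Iio δ'.1))) → (n : ℕ) → (Fin n → Ordinal.{0}) → Ordinal.{0} :=
    fun q n x =>
      if h : ∀ i : Fin n, x i < q.1.1 then
        (q.2.2 (fun j => if hj : j < n then ⟨x ⟨j, hj⟩, (h ⟨j, hj⟩).le⟩
          else ⟨0, Set.mem_Iic.mpr zero_le⟩) : (Set.Iio q.2.1.1)).1
      else 0 with hdec
  set E : Ordinal.{0} → (n : ℕ) → (Fin n → Ordinal.{0}) → Ordinal.{0} :=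
    fun γ n x => if h : γ < lam.ord then dec (Function.invFun emb ⟨γ, h⟩) n x else 0 with hE
  refine ⟨E, ?_, ?_⟩
  · intro γ n x
    simp only [hE]
    split
    · next h =>
      simp only [hdec]
      split
      · exact lt_trans ((Function.invFun ⇑emb ⟨γ, h⟩).2.2 _).2
          (Function.invFun ⇑emb ⟨γ, h⟩).2.1.2
      · exact hzo
    · exact hzo
  · intro n δ δ' hδ hδ' hδ'0 g hg
    set ghat : (ℕ → (Set.Iic δ)) → (Set.Iio δ') := fun u =>
      if h : ∀ i : Fin n, (u i).1 < δ then ⟨g (fun i => (u i).1), hg _ h⟩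
      else ⟨0, hδ'0⟩ with hghat
    set q : ((δ : (Set.Iio lam.ord)) × (δ' : (Set.Iio lam.ord)) ×
        ((ℕ → (Set.Iic δ.1)) → (Set.Iio δ'.1))) := ⟨⟨δ, hδ⟩, ⟨δ', hδ'⟩, ghat⟩ with hq
    refine ⟨(emb q).1, (emb q).2, ?_⟩
    intro x hx
    have hinv : Function.invFun ⇑emb ⟨(emb q).1, (emb q).2⟩ = q := by
      have h5 : (⟨(emb q).1, (emb q).2⟩ : Set.Iio lam.ord) = emb q := rfl
      rw [h5]
      exact Function.leftInverse_invFun emb.injective q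
    have h6 : ∀ i : Fin n, x i < (q.1 : Ordinal) := hx
    have h7 : ∀ i : Fin n,
        (((fun j => if hj : j < n then (⟨x ⟨j, hj⟩, (h6 ⟨j, hj⟩).le⟩ : (Set.Iic δ))
          else ⟨0, Set.mem_Iic.mpr zero_le⟩) : ℕ → (Set.Iic δ)) (i : ℕ)).1 < δ := by
      intro i
      dsimp only
      rw [dif_pos i.isLt]
      exact hx i
    simp only [hE]
    have hlt : ((emb q : Set.Iio lam.ord) : Ordinal) < lam.ord := Set.mem_Iio.mp (emb q).2
    rw [dif_pos hlt]
    have hinv' : ∀ h : ((emb q : Set.Iio lam.ord) : Ordinal) < lam.ord,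
        Function.invFun ⇑emb ⟨((emb q : Set.Iio lam.ord) : Ordinal), h⟩ = q := by
      intro h
      have h5 : (⟨((emb q : Set.Iio lam.ord) : Ordinal), h⟩ : Set.Iio lam.ord) = emb q :=
        Subtype.ext rfl
      rw [h5]
      exact Function.leftInverse_invFun emb.injective q
    rw [hinv' hlt]
    simp only [hdec]
    rw [dif_pos h6]
    change (ghat (fun j => if hj : j < n then ⟨x ⟨j, hj⟩, (h6 ⟨j, hj⟩).le⟩
      else ⟨0, Set.mem_Iic.mpr zero_le⟩) : Ordinal) = g x
    simp only [hghat]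
    rw [dif_pos h7]
    exact congrArg g (funext fun i => by simp [i.isLt])

lemma exists_bound_of_small (kap : Cardinal.{0}) (hreg : kap.IsRegular)
    (s : Set Ordinal.{0}) (hs : ∀ y ∈ s, y < kap.ord) (hcard : #s < Cardinal.lift.{1} kap) :
    ∃ β, β < kap.ord ∧ ∀ y ∈ s, y < β := by
  have hlim : Order.IsSuccLimit kap.ord := Cardinal.isSuccLimit_ord hreg.aleph0_le
  set e := Ordinal.ToType.mk (o := kap.ord) with he
  set t : Set kap.ord.ToType := {x | ((e.symm x : Set.Iio kap.ord) : Ordinal) ∈ s} with ht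
  have emb : t ↪ s :=
    ⟨fun x => ⟨((e.symm x.1 : Set.Iio kap.ord) : Ordinal), x.2⟩, by
      intro x y hxy
      simp only [Subtype.mk.injEq] at hxy
      exact Subtype.ext (e.symm.injective (Subtype.ext hxy))⟩
  have h1 : Cardinal.lift.{1} #t ≤ Cardinal.lift.{0} #s := Cardinal.lift_mk_le'.mpr ⟨emb⟩
  rw [Cardinal.lift_id'] at h1
  have h2 : #t < kap := Cardinal.lift_lt.mp (h1.trans_lt hcard)
  set g : t → Ordinal.{0} := fun x => ((e.symm x.1 : Set.Iio kap.ord) : Ordinal) + 1 with hg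
  have hglt : ∀ x, g x < kap.ord := by
    intro x
    have : ((e.symm x.1 : Set.Iio kap.ord) : Ordinal) < kap.ord := (e.symm x.1).2
    rw [hg]
    simpa only [Ordinal.add_one_eq_succ] using hlim.succ_lt this
  have hβ : iSup g < kap.ord := Ordinal.iSup_lt_ord (by rwa [hreg.cof_eq]) hglt
  refine ⟨iSup g, hβ, fun y hy => ?_⟩
  have hy' : y < kap.ord := hs y hy
  have hmem : e ⟨y, hy'⟩ ∈ t := by simpa [ht] using hy
  calc y < y + 1 := by
        rw [Ordinal.add_one_eq_succ]; exact Order.lt_succ y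
    _ = g ⟨_, hmem⟩ := by simp [hg]
    _ ≤ iSup g := Ordinal.le_iSup g _

lemma lift_isRegular {kap : Cardinal.{0}} (h : kap.IsRegular) :
    (Cardinal.lift.{1} kap).IsRegular := by
  constructor
  · exact Cardinal.aleph0_le_lift.mpr h.aleph0_le
  · rw [← Cardinal.lift_ord, ← Ordinal.lift_cof]
    exact Cardinal.lift_le.mpr h.2

open Classical in
def bsel (kap : Cardinal.{0}) (s : Set Ordinal.{0}) : Ordinal.{0} :=
  if h : ∃ β, β < kap.ord ∧ ∀ y ∈ s ∩ Set.Iio kap.ord, y < β then h.choose else 0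

lemma bsel_lt (kap : Cardinal.{0}) (s : Set Ordinal.{0}) (h0 : (0 : Ordinal) < kap.ord) :
    bsel kap s < kap.ord := by
  rw [bsel]
  haveI := Classical.propDecidable
  split
  · next h => exact h.choose_spec.1
  · exact h0

lemma bsel_bound (kap : Cardinal.{0}) (s : Set Ordinal.{0})
    (h : ∃ β, β < kap.ord ∧ ∀ y ∈ s ∩ Set.Iio kap.ord, y < β) :
    ∀ y ∈ s ∩ Set.Iio kap.ord, y < bsel kap s := by
  rw [bsel, dif_pos h]
  exact h.choose_spec.2

def stepSet (kap : Cardinal.{0})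
    (E : Ordinal.{0} → (n : ℕ) → (Fin n → Ordinal.{0}) → Ordinal.{0})
    (F : Set FinFun) (s : Set Ordinal.{0}) : Set Ordinal.{0} :=
  s ∪ (Set.range fun p : (Σ f : F, (Fin (f : FinFun).1 → s)) =>
        (p.1 : FinFun).2 fun i => (p.2 i : Ordinal))
    ∪ (Set.range fun p : s × (Σ n : ℕ, (Fin n → s)) =>
        E (p.1 : Ordinal) p.2.1 fun i => (p.2.2 i : Ordinal))
    ∪ Set.Iio (bsel kap s)

lemma subset_stepSet (kap E F s) : s ⊆ stepSet kap E F s :=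
  fun _ hx => Or.inl (Or.inl (Or.inl hx))

lemma stepSet_mem_F (kap E F s) (f : FinFun) (hf : f ∈ F) (x : Fin f.1 → Ordinal.{0})
    (hx : ∀ i, x i ∈ s) : f.2 x ∈ stepSet kap E F s :=
  Or.inl (Or.inl (Or.inr ⟨⟨⟨f, hf⟩, fun i => ⟨x i, hx i⟩⟩, rfl⟩))

lemma stepSet_mem_E (kap E F s) (γ : Ordinal.{0}) (hγ : γ ∈ s) (n : ℕ)
    (x : Fin n → Ordinal.{0}) (hx : ∀ i, x i ∈ s) : E γ n x ∈ stepSet kap E F s :=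
  Or.inl (Or.inr ⟨⟨⟨γ, hγ⟩, ⟨n, fun i => ⟨x i, hx i⟩⟩⟩, rfl⟩)

lemma stepSet_mem_Iio (kap E F s) (y : Ordinal.{0}) (hy : y < bsel kap s) :
    y ∈ stepSet kap E F s :=
  Or.inr hy

lemma stepSet_lt_lam (lam kap : Cardinal.{0}) (E) (F : Set FinFun) (s : Set Ordinal.{0})
    (hF : FamOn lam F) (hE1 : ∀ γ n x, E γ n x < lam.ord)
    (hkl : kap.ord ≤ lam.ord) (h0 : (0 : Ordinal) < kap.ord)
    (hs : ∀ x ∈ s, x < lam.ord) :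
    ∀ x ∈ stepSet kap E F s, x < lam.ord := by
  rintro x (((hx | ⟨p, rfl⟩) | ⟨p, rfl⟩) | hx)
  · exact hs x hx
  · exact hF _ p.1.2 _ fun i => hs _ (p.2 i).2
  · exact hE1 _ _ _
  · exact lt_of_lt_of_le (lt_trans hx (bsel_lt kap s h0)) hkl

lemma mk_stepSet_lt (kap : Cardinal.{0}) (E) (F : Set FinFun) (s : Set Ordinal.{0})
    (hreg : kap.IsRegular) (hκω : ℵ₀ < kap) (hFc : F.Countable)
    (hs : #s < Cardinal.lift.{1} kap) (h0 : (0 : Ordinal) < kap.ord) :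
    #(stepSet kap E F s) < Cardinal.lift.{1} kap := by
  set c : Cardinal.{1} := max #s ℵ₀ with hc
  have hck : c < Cardinal.lift.{1} kap := max_lt hs (Cardinal.aleph0_lt_lift.mpr hκω)
  have hcω : ℵ₀ ≤ c := le_max_right _ _
  have hκl : ℵ₀ ≤ Cardinal.lift.{1} kap := Cardinal.aleph0_le_lift.mpr hκω.le
  have htuple : ∀ n : ℕ, #(Fin n → s) ≤ c := by
    intro n
    rw [Cardinal.mk_arrow, Cardinal.lift_id', Cardinal.mk_fin, Cardinal.lift_natCast,
      Cardinal.power_natCast]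
    calc #s ^ n ≤ c ^ n := pow_le_pow_left' (le_max_left _ _) n
      _ ≤ c := Cardinal.power_nat_le hcω
  have hF : #F ≤ ℵ₀ := by
    have := hFc.to_subtype
    exact Cardinal.mk_le_aleph0
  have hchunk1 : #(Set.range fun p : (Σ f : F, (Fin (f : FinFun).1 → s)) =>
      (p.1 : FinFun).2 fun i => (p.2 i : Ordinal)) ≤ c := by
    refine Cardinal.mk_range_le.trans ?_
    rw [Cardinal.mk_sigma]
    calc Cardinal.sum (fun f : F => #(Fin (f : FinFun).1 → s))
        ≤ Cardinal.sum (fun _ : F => c) := Cardinal.sum_le_sum _ _ fun f => htuple _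
      _ = #F * c := Cardinal.sum_const' _ _
      _ ≤ ℵ₀ * c := mul_le_mul_left hF c
      _ ≤ c * c := mul_le_mul_left hcω c
      _ = c := Cardinal.mul_eq_self hcω
  have hsig : #(Σ n : ℕ, (Fin n → s)) ≤ c := by
    rw [Cardinal.mk_sigma]
    calc Cardinal.sum (fun n : ℕ => #(Fin n → s))
        ≤ Cardinal.sum (fun _ : ℕ => c) := Cardinal.sum_le_sum _ _ htuple
      _ = Cardinal.lift.{1} #ℕ * Cardinal.lift.{0} c := Cardinal.sum_const _ _
      _ = ℵ₀ * c := by rw [Cardinal.mk_nat, Cardinal.lift_aleph0, Cardinal.lift_id']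
      _ ≤ c * c := mul_le_mul_left hcω c
      _ = c := Cardinal.mul_eq_self hcω
  have hchunk2 : #(Set.range fun p : s × (Σ n : ℕ, (Fin n → s)) =>
      E (p.1 : Ordinal) p.2.1 fun i => (p.2.2 i : Ordinal)) ≤ c := by
    refine Cardinal.mk_range_le.trans ?_
    rw [Cardinal.mk_prod, Cardinal.lift_id, Cardinal.lift_id]
    calc #s * #(Σ n : ℕ, (Fin n → s)) ≤ c * c :=
          mul_le_mul' (le_max_left _ _) hsig
      _ = c := Cardinal.mul_eq_self hcω
  have hIio : #(Set.Iio (bsel kap s)) < Cardinal.lift.{1} kap := by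
    rw [Ordinal.mk_Iio_ordinal]
    exact Cardinal.lift_lt.mpr (Cardinal.lt_ord.mp (bsel_lt kap s h0))
  calc #(stepSet kap E F s)
      ≤ #((s ∪ (Set.range fun p : (Σ f : F, (Fin (f : FinFun).1 → s)) =>
          (p.1 : FinFun).2 fun i => (p.2 i : Ordinal))
          ∪ (Set.range fun p : s × (Σ n : ℕ, (Fin n → s)) =>
          E (p.1 : Ordinal) p.2.1 fun i => (p.2.2 i : Ordinal)) : Set Ordinal.{0}))
        + #(Set.Iio (bsel kap s)) := Cardinal.mk_union_le _ _
    _ < Cardinal.lift.{1} kap := by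
        apply Cardinal.add_lt_of_lt hκl _ hIio
        calc #((s ∪ (Set.range fun p : (Σ f : F, (Fin (f : FinFun).1 → s)) =>
            (p.1 : FinFun).2 fun i => (p.2 i : Ordinal))
            ∪ (Set.range fun p : s × (Σ n : ℕ, (Fin n → s)) =>
            E (p.1 : Ordinal) p.2.1 fun i => (p.2.2 i : Ordinal)) : Set Ordinal.{0}))
            ≤ #((s ∪ (Set.range fun p : (Σ f : F, (Fin (f : FinFun).1 → s)) =>
            (p.1 : FinFun).2 fun i => (p.2 i : Ordinal)) : Set Ordinal.{0}))
              + #(Set.range fun p : s × (Σ n : ℕ, (Fin n → s)) =>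
              E (p.1 : Ordinal) p.2.1 fun i => (p.2.2 i : Ordinal)) := Cardinal.mk_union_le _ _
          _ < Cardinal.lift.{1} kap := by
              apply Cardinal.add_lt_of_lt hκl _ (hchunk2.trans_lt hck)
              calc #((s ∪ (Set.range fun p : (Σ f : F, (Fin (f : FinFun).1 → s)) =>
                  (p.1 : FinFun).2 fun i => (p.2 i : Ordinal)) : Set Ordinal.{0}))
                  ≤ #s + #(Set.range fun p : (Σ f : F, (Fin (f : FinFun).1 → s)) =>
                    (p.1 : FinFun).2 fun i => (p.2 i : Ordinal)) := Cardinal.mk_union_le _ _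
                _ < Cardinal.lift.{1} kap :=
                    Cardinal.add_lt_of_lt hκl hs (hchunk1.trans_lt hck)

def iterSet (kap : Cardinal.{0})
    (E : Ordinal.{0} → (n : ℕ) → (Fin n → Ordinal.{0}) → Ordinal.{0})
    (F : Set FinFun) (b : Set Ordinal.{0}) : ℕ → Set Ordinal.{0}
  | 0 => b
  | m + 1 => stepSet kap E F (iterSet kap E F b m)

lemma closure_lemma (lam kap : Cardinal.{0}) (hreg : kap.IsRegular) (hκω : ℵ₀ < kap)
    (hkl : kap < lam)
    (E : Ordinal.{0} → (n : ℕ) → (Fin n → Ordinal.{0}) → Ordinal.{0})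
    (hE1 : ∀ γ n x, E γ n x < lam.ord)
    (F : Set FinFun) (hFc : F.Countable) (hF : FamOn lam F)
    (b : Set Ordinal.{0}) (hb : b ∈ smallSubsets lam kap) :
    ∃ a ∈ smallSubsets lam kap, b ⊆ a ∧
      (∃ β < kap.ord, a ∩ Set.Iio kap.ord = Set.Iio β) ∧
      (∀ γ ∈ a, ∀ (n : ℕ) (x : Fin n → Ordinal.{0}), (∀ i, x i ∈ a) → E γ n x ∈ a) ∧
      (∀ f ∈ F, ∀ x : Fin f.1 → Ordinal.{0}, (∀ i, x i ∈ a) → f.2 x ∈ a) := by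
  have h0 : (0 : Ordinal) < kap.ord := by
    rw [Cardinal.lt_ord]
    simpa using hreg.pos
  have hkl' : kap.ord ≤ lam.ord := Cardinal.ord_le_ord.mpr hkl.le
  -- levels
  have hlevel : ∀ m, #(iterSet kap E F b m) < Cardinal.lift.{1} kap ∧
      ∀ x ∈ iterSet kap E F b m, x < lam.ord := by
    intro m
    induction m with
    | zero => exact ⟨hb.2, hb.1⟩
    | succ m ih =>
        exact ⟨mk_stepSet_lt kap E F _ hreg hκω hFc ih.1 h0,
          stepSet_lt_lam lam kap E F _ hF hE1 hkl' h0 ih.2⟩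
  have hmono : Monotone (iterSet kap E F b) :=
    monotone_nat_of_le_succ fun m => subset_stepSet kap E F _
  have hex : ∀ m, ∃ β, β < kap.ord ∧
      ∀ y ∈ iterSet kap E F b m ∩ Set.Iio kap.ord, y < β := by
    intro m
    exact exists_bound_of_small kap hreg _ (fun y hy => hy.2)
      ((Cardinal.mk_le_mk_of_subset inter_subset_left).trans_lt (hlevel m).1)
  refine ⟨⋃ m, iterSet kap E F b m, ⟨?_, ?_⟩, ?_, ?_, ?_, ?_⟩
  · -- elements < lam.ord
    intro x hx
    obtain ⟨m, hm⟩ := mem_iUnion.mp hx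
    exact (hlevel m).2 x hm
  · -- cardinality
    have h1 := Cardinal.mk_iUnion_le_sum_mk_lift (f := fun m => iterSet kap E F b m)
    rw [Cardinal.lift_id'] at h1
    refine h1.trans_lt ?_
    exact Cardinal.sum_lt_lift_of_isRegular (lift_isRegular hreg)
      (by rw [Cardinal.mk_nat, Cardinal.lift_aleph0]
          exact (Cardinal.aleph0_lt_lift.{0,1} (c := kap)).mpr hκω) fun m => (hlevel m).1
  · -- b ⊆ a
    exact subset_iUnion_of_subset 0 fun x hx => hx
  · -- initial segment
    refine ⟨⨆ m, bsel kap (iterSet kap E F b m), ?_, ?_⟩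
    · refine Ordinal.iSup_lt_ord ?_ fun m => bsel_lt kap _ h0
      rw [hreg.cof_eq, Cardinal.mk_nat]
      exact hκω
    · ext y
      constructor
      · rintro ⟨hya, hyk⟩
        obtain ⟨m, hm⟩ := mem_iUnion.mp hya
        have h2 : y < bsel kap (iterSet kap E F b m) :=
          bsel_bound kap _ (by
            obtain ⟨β, h3, h4⟩ := hex m
            exact ⟨β, h3, h4⟩) y ⟨hm, hyk⟩
        exact lt_of_lt_of_le h2 (Ordinal.le_iSup _ m)
      · intro hy
        obtain ⟨m, hm⟩ := Ordinal.lt_iSup_iff.mp hy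
        refine ⟨mem_iUnion.mpr ⟨m + 1, stepSet_mem_Iio kap E F _ y hm⟩, ?_⟩
        exact hm.trans (bsel_lt kap _ h0)
  · -- E-closure
    intro γ hγ n x hx
    obtain ⟨m0, hm0⟩ := mem_iUnion.mp hγ
    choose lv hlv using fun i => mem_iUnion.mp (hx i)
    set N := max m0 (Finset.univ.sup lv) with hN
    have hγN : γ ∈ iterSet kap E F b N := hmono (le_max_left _ _) hm0
    have hxN : ∀ i, x i ∈ iterSet kap E F b N := fun i =>
      hmono ((Finset.le_sup (Finset.mem_univ i)).trans (le_max_right _ _)) (hlv i)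
    exact mem_iUnion.mpr ⟨N + 1, stepSet_mem_E kap E F _ γ hγN n x hxN⟩
  · -- F-closure
    intro f hf x hx
    choose lv hlv using fun i => mem_iUnion.mp (hx i)
    set N := Finset.univ.sup lv with hN
    have hxN : ∀ i, x i ∈ iterSet kap E F b N := fun i =>
      hmono (Finset.le_sup (Finset.mem_univ i)) (hlv i)
    exact mem_iUnion.mpr ⟨N + 1, stepSet_mem_F kap E F _ f hf x hxN⟩

/-- If `λ` is a strong limit singular cardinal of cofinality `σ`, `κ` is
regular and `σ < κ < λ`, then there is a stationary subset of `[λ]^{<κ}`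
all of whose unbounded subsets are stationary. -/
theorem exists_stationary_all_unbounded_subsets_stationary_strongLimit
    (lam kap sigma : Cardinal.{0})
    (hsl : lam.IsStrongLimit)
    (hcof : lam.ord.cof = sigma)
    (hsing : sigma < lam)
    (hreg : kap.IsRegular)
    (hsk : sigma < kap) (hkl : kap < lam) :
    ∃ S ⊆ smallSubsets lam kap, IsStationaryPkl lam kap S ∧
      ∀ T ⊆ S, IsUnbounded lam kap T → IsStationaryPkl lam kap T := by
  classical
  have hσω : ℵ₀ ≤ sigma := by
    rw [← hcof]
    exact (Ordinal.aleph0_le_cof).mpr (Cardinal.isSuccLimit_ord hsl.aleph0_le)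
  have hκω : ℵ₀ < kap := lt_of_le_of_lt hσω hsk
  have hwl : ℵ₀ < lam := hκω.trans hkl
  have hlim : Order.IsSuccLimit lam.ord := Cardinal.isSuccLimit_ord hsl.aleph0_le
  obtain ⟨E, hE1, hE2⟩ := exists_code lam hsl hwl
  refine ⟨{a | a ∈ smallSubsets lam kap ∧
      (∃ β < kap.ord, a ∩ Set.Iio kap.ord = Set.Iio β) ∧
      ∀ γ ∈ a, ∀ (n : ℕ) (x : Fin n → Ordinal.{0}), (∀ i, x i ∈ a) → E γ n x ∈ a},
    fun a ha => ha.1, ?_, ?_⟩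
  · -- S is stationary
    rintro C ⟨F, hFc, hF, rfl⟩
    have hempty : (∅ : Set Ordinal.{0}) ∈ smallSubsets lam kap := by
      constructor
      · intro x hx
        exact absurd hx (Set.notMem_empty x)
      · rw [Cardinal.mk_emptyCollection]
        exact Cardinal.aleph0_pos.trans_le (Cardinal.aleph0_le_lift.mpr hreg.aleph0_le)
    obtain ⟨a, hsm, hba, hβ, hEc, hFcl⟩ :=
      closure_lemma lam kap hreg hκω hkl E hE1 F hFc hF ∅ hempty
    exact ⟨a, ⟨hsm, hβ, hEc⟩, hsm, hFcl, hβ⟩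
  · -- every unbounded subset is stationary
    intro T hTS hTub C hC
    obtain ⟨F, hFc, hF, rfl⟩ := hC
    obtain ⟨ι, φ, hlsub, hι⟩ := Ordinal.exists_lsub_cof lam.ord
    have hflt : ∀ i, φ i < lam.ord := fun i => hlsub ▸ Ordinal.lt_lsub φ i
    have hcofinal : ∀ x, x < lam.ord → ∃ i, x ≤ φ i := by
      intro x hx
      rw [← hlsub] at hx
      exact Ordinal.lt_lsub_iff.mp hx
    have hι' : #ι = sigma := by rw [hι, hcof]
    have hsucc : ∀ o : Ordinal.{0}, o < o + 1 := fun o => by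
      rw [Ordinal.add_one_eq_succ]
      exact Order.lt_succ o
    have hcode : ∀ (f : F) (i j : ι), ∃ γ, γ < lam.ord ∧
        ∀ x : Fin (f : FinFun).1 → Ordinal.{0}, (∀ t, x t < φ i + 1) →
          E γ (f : FinFun).1 x =
            if (f : FinFun).2 x < φ j + 1 then (f : FinFun).2 x else 0 := by
      intro f i j
      have h1 : φ i + 1 < lam.ord := by
        rw [Ordinal.add_one_eq_succ]; exact hlim.succ_lt (hflt i)
      have h2 : φ j + 1 < lam.ord := by
        rw [Ordinal.add_one_eq_succ]; exact hlim.succ_lt (hflt j)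
      have h3 : (0 : Ordinal) < φ j + 1 := zero_le.trans_lt (hsucc _)
      obtain ⟨γ, hγ, hg⟩ := hE2 (f : FinFun).1 (φ i + 1) (φ j + 1) h1 h2 h3
        (fun x => if (f : FinFun).2 x < φ j + 1 then (f : FinFun).2 x else 0)
        (fun x _ => by
          split
          · assumption
          · exact h3)
      exact ⟨γ, hγ, fun x hx => hg x hx⟩
    choose cde hcde1 hcde2 using hcode
    set b : Set Ordinal.{0} := Set.range fun p : F × ULift.{1} ι × ULift.{1} ι =>
      cde p.1 p.2.1.down p.2.2.down with hbdef
    have hbsmall : b ∈ smallSubsets lam kap := by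
      constructor
      · rintro x ⟨p, rfl⟩
        exact hcde1 _ _ _
      · refine Cardinal.mk_range_le.trans_lt ?_
        have hσl : ℵ₀ ≤ Cardinal.lift.{1} sigma := Cardinal.aleph0_le_lift.mpr hσω
        have hmkF : #F ≤ Cardinal.lift.{1} sigma := by
          have := hFc.to_subtype
          exact Cardinal.mk_le_aleph0.trans hσl
        have hmkU : #(ULift.{1} ι) = Cardinal.lift.{1} sigma := by
          rw [Cardinal.mk_uLift, hι']
        calc #(F × ULift.{1} ι × ULift.{1} ι)
            = #F * (#(ULift.{1} ι) * #(ULift.{1} ι)) := by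
              simp [Cardinal.mk_prod]
          _ ≤ Cardinal.lift.{1} sigma *
              (Cardinal.lift.{1} sigma * Cardinal.lift.{1} sigma) := by
              rw [hmkU]
              exact mul_le_mul_left hmkF _
          _ = Cardinal.lift.{1} sigma := by
              rw [Cardinal.mul_eq_self hσl, Cardinal.mul_eq_self hσl]
          _ < Cardinal.lift.{1} kap := Cardinal.lift_lt.mpr hsk
    obtain ⟨a, haT, hba⟩ := hTub b hbsmall
    obtain ⟨hasm, haβ, haE⟩ := hTS haT
    refine ⟨a, haT, hasm, ?_, haβ⟩
    intro f hf x hx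
    have hxlam : ∀ t, x t < lam.ord := fun t => hasm.1 _ (hx t)
    have hsup : (⨆ t, x t) < lam.ord := by
      refine Ordinal.iSup_lt_ord ?_ hxlam
      rw [Cardinal.mk_fin]
      exact (Cardinal.nat_lt_aleph0 _).trans_le (by rw [hcof]; exact hσω)
    obtain ⟨i, hi⟩ := hcofinal _ hsup
    have hxi : ∀ t, x t < φ i + 1 := fun t =>
      lt_of_le_of_lt ((Ordinal.le_iSup _ t).trans hi) (hsucc _)
    have hv : f.2 x < lam.ord := hF f hf x hxlam
    obtain ⟨j, hj⟩ := hcofinal _ hv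
    have hvj : f.2 x < φ j + 1 := lt_of_le_of_lt hj (hsucc _)
    have hγb : cde ⟨f, hf⟩ i j ∈ b := ⟨(⟨f, hf⟩, ULift.up i, ULift.up j), rfl⟩
    have hEmem : E (cde ⟨f, hf⟩ i j) ((⟨f, hf⟩ : F) : FinFun).1 x ∈ a :=
      haE _ (hba hγb) _ x hx
    have hEeq := hcde2 ⟨f, hf⟩ i j x hxi
    rw [hEeq] at hEmem
    have : (((⟨f, hf⟩ : F) : FinFun)).2 x ∈ a := by
      rwa [if_pos hvj] at hEmem
    exact this
end
end

section
/- Let κ be a regular uncountable cardinal and λ ≥ κ. If S ⊆ [λ]^{<κ} is stationary, then there is no injective function f : S → λ such that f(a) ∈ a for every a ∈ S. -/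
open Cardinal Set

noncomputable section

/-- If `κ` is regular uncountable, `λ ≥ κ` and `S ⊆ [λ]^{<κ}` is
stationary, then there is no injective choice function `f : S → λ`
(i.e. an injective `f` with `f a ∈ a` for all `a ∈ S`). -/
theorem no_injective_choice_function_on_stationary
    (lam kap : Cardinal.{0}) (hreg : kap.IsRegular) (hunc : ℵ₀ < kap)
    (hkl : kap ≤ lam)
    (S : Set (Set Ordinal.{0})) (hS : S ⊆ smallSubsets lam kap)
    (hstat : IsStationaryPkl lam kap S) :
    ¬ ∃ f : Set Ordinal.{0} → Ordinal.{0},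
        Set.InjOn f S ∧ ∀ a ∈ S, f a ∈ a := by
  rintro ⟨f, hinj, hch⟩
  -- `λ.ord` is positive
  have hlam0 : (0 : Ordinal) < lam.ord := by
    have : (0:Cardinal) < lam := lt_of_lt_of_le (lt_of_le_of_lt (Cardinal.zero_le _) hunc) hkl
    rwa [Cardinal.lt_ord, Ordinal.card_zero]
  -- for each γ, pick a point of λ avoiding the unique `a ∈ S` with `f a = γ`
  have key : ∀ γ : Ordinal.{0}, ∃ x : Ordinal.{0}, x < lam.ord ∧
      ∀ a ∈ S, f a = γ → x ∉ a := by
    intro γ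
    by_cases h : ∃ a ∈ S, f a = γ
    · obtain ⟨a, haS, hfa⟩ := h
      have hsm := hS haS
      have hcard : Cardinal.mk ↥a < Cardinal.mk ↥(Set.Iio lam.ord) := by
        rw [Ordinal.mk_Iio_ordinal, Cardinal.card_ord]
        exact lt_of_lt_of_le hsm.2 (Cardinal.lift_le.mpr hkl)
      have hns : ¬ Set.Iio lam.ord ⊆ a := fun hsub =>
        absurd (Cardinal.mk_le_mk_of_subset hsub) (not_le.mpr hcard)
      obtain ⟨x, hx, hxa⟩ := Set.not_subset.mp hns
      refine ⟨x, hx, fun b hbS hfb => ?_⟩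
      have : b = a := hinj hbS haS (hfb.trans hfa.symm)
      rwa [this]
    · exact ⟨0, hlam0, fun a haS hfa => absurd ⟨a, haS, hfa⟩ h⟩
  choose g hg1 hg2 using key
  -- the finitary function
  set F : Set FinFun := {⟨1, fun x => g (x 0)⟩} with hF
  have hclub : IsClubPkl lam kap (clubOf lam kap F) := by
    refine ⟨F, Set.countable_singleton _, ?_, rfl⟩
    rintro f hf x hx
    rw [Set.mem_singleton_iff] at hf
    subst hf
    exact hg1 _
  obtain ⟨a, haS, haC⟩ := hstat _ hclub
  have hclosed := haC.2.1 ⟨1, fun x => g (x 0)⟩ rfl (fun _ => f a)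
    (fun i => hch a haS)
  exact hg2 (f a) a haS rfl hclosed
end
end

section
/- Assume κ is a regular uncountable cardinal, κ ≤ λ, and λ equals the cofinality of the partial order ([λ]^{<κ}, ⊆), i.e., λ is the least cardinality of a family U ⊆ [λ]^{<κ} such that every member of [λ]^{<κ} is contained in some member of U. Then every stationary subset of [λ]^{<κ} contains an unbounded non-stationary subset. -/
open Cardinal Set

noncomputable section

/-- Auxiliary: a stationary set meets the club of sets containing a fixed
small set `c`, hence contains a superset of `c`. -/
theorem aux_exists_superset_mem (lam kap : Cardinal.{0}) (hk0 : ℵ₀ ≤ kap) (hkl : kap ≤ lam)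
    (S : Set (Set Ordinal.{0})) (hS : IsStationaryPkl lam kap S)
    (c : Set Ordinal.{0}) (hc : c ∈ smallSubsets lam kap) :
    ∃ b ∈ S, c ⊆ b := by
  obtain ⟨hc1, hc2⟩ := hc
  have hol : kap.ord ≤ lam.ord := Cardinal.ord_le_ord.2 hkl
  have hlam0 : (0 : Ordinal) < lam.ord := by
    have : (0:Cardinal) < lam := lt_of_lt_of_le aleph0_pos (hk0.trans hkl)
    simpa [Cardinal.ord_zero] using Cardinal.ord_lt_ord.2 this
  obtain ⟨c', hc'⟩ := Cardinal.mem_range_lift_of_le hc2.le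
  have hc'k : c' < kap := by rwa [← hc', Cardinal.lift_lt] at hc2
  set η : Ordinal.{0} := c'.ord with hη
  have hηk : η < kap.ord := Cardinal.ord_lt_ord.2 hc'k
  have hmk : Cardinal.mk ↥(Set.Iio η) = Cardinal.mk ↥c := by
    rw [Ordinal.mk_Iio_ordinal, Cardinal.card_ord, hc']
  obtain ⟨e⟩ := Cardinal.eq.mp hmk
  set f : Ordinal.{0} → Ordinal.{0} := fun ξ => if h : ξ < η then (e ⟨ξ, h⟩ : Ordinal) else 0
    with hf
  have hfpos : ∀ ξ (h : ξ < η), f ξ = (e ⟨ξ, h⟩ : Ordinal) := fun ξ h => dif_pos h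
  have hfneg : ∀ ξ, ¬ ξ < η → f ξ = 0 := fun ξ h => dif_neg h
  set F : Set FinFun := {⟨0, fun _ => η⟩, ⟨1, fun x => f (x 0)⟩} with hF
  have hfam : FamOn lam F := by
    rintro g (rfl | rfl) x hx
    · exact lt_of_lt_of_le hηk hol
    · show f (x 0) < lam.ord
      by_cases h : x 0 < η
      · rw [hfpos _ h]; exact hc1 _ (e ⟨x 0, h⟩).2
      · rw [hfneg _ h]; exact hlam0
  obtain ⟨b, hbS, hbc⟩ := hS _ ⟨F, ((Set.countable_singleton _).insert _), hfam, rfl⟩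
  obtain ⟨hsmall, hclos, β, hβ, hseg⟩ := hbc
  refine ⟨b, hbS, ?_⟩
  have hηb : η ∈ b := hclos ⟨0, fun _ => η⟩ (Set.mem_insert _ _) Fin.elim0 (fun i => i.elim0)
  have hηβ : η < β := by
    have : η ∈ b ∩ Set.Iio kap.ord := ⟨hηb, hηk⟩
    rw [hseg] at this; exact this
  intro y hy
  obtain ⟨⟨ξ, hξ⟩, hξy⟩ := e.surjective ⟨y, hy⟩
  have hξb : ξ ∈ b := by
    have : ξ ∈ Set.Iio β := lt_trans hξ hηβ
    rw [← hseg] at this; exact this.1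
  have h2 := hclos ⟨1, fun x => f (x 0)⟩ (Set.mem_insert_of_mem _ rfl)
    (fun _ => ξ) (fun _ => hξb)
  have h3 : f ξ ∈ b := h2
  have hfval : f ξ = y := by
    rw [hfpos ξ hξ]; exact congrArg Subtype.val hξy
  rwa [hfval] at h3

/-- If `κ` is regular uncountable, `κ ≤ λ`, and `λ` is the cofinality of
`([λ]^{<κ}, ⊆)`, i.e. the least cardinality of an unbounded family
`U ⊆ [λ]^{<κ}`, then every stationary subset of `[λ]^{<κ}` contains an
unbounded non-stationary subset. -/
theorem stationary_contains_unbounded_nonstationary_of_cf_eq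
    (lam kap : Cardinal.{0}) (hreg : kap.IsRegular) (hunc : ℵ₀ < kap)
    (hkl : kap ≤ lam)
    (hcf : Cardinal.lift.{1} lam =
      sInf {c : Cardinal.{1} | ∃ U ⊆ smallSubsets lam kap,
        IsUnbounded lam kap U ∧ Cardinal.mk ↥U = c}) :
    ∀ S ⊆ smallSubsets lam kap, IsStationaryPkl lam kap S →
      ∃ T ⊆ S, IsUnbounded lam kap T ∧ ¬ IsStationaryPkl lam kap T := by
  intro S hSsub hSstat
  have hk0 : ℵ₀ ≤ kap := hunc.le
  have hlam0 : (0 : Ordinal) < lam.ord := by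
    have : (0:Cardinal) < lam := lt_of_lt_of_le aleph0_pos (hk0.trans hkl)
    simpa [Cardinal.ord_zero] using Cardinal.ord_lt_ord.2 this
  -- the set in hcf is nonempty
  have hne : {c : Cardinal.{1} | ∃ U ⊆ smallSubsets lam kap,
      IsUnbounded lam kap U ∧ Cardinal.mk ↥U = c}.Nonempty :=
    ⟨_, smallSubsets lam kap, subset_rfl, fun b hb => ⟨b, hb, subset_rfl⟩, rfl⟩
  obtain ⟨U, hUsub, hUunb, hUmk⟩ : ∃ U ⊆ smallSubsets lam kap,
      IsUnbounded lam kap U ∧ Cardinal.mk ↥U = Cardinal.lift.{1} lam := by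
    have := csInf_mem hne
    rw [← hcf] at this
    exact this
  have hmkIio : Cardinal.mk ↥(Set.Iio lam.ord) = Cardinal.mk ↥U := by
    rw [Ordinal.mk_Iio_ordinal, Cardinal.card_ord, hUmk]
  obtain ⟨e⟩ := Cardinal.eq.mp hmkIio
  -- for each α < λ, the set a_α ∪ {α} is small
  have hcsmall : ∀ α : ↥(Set.Iio lam.ord),
      ((e α : Set Ordinal.{0}) ∪ {(α : Ordinal)}) ∈ smallSubsets lam kap := by
    intro α
    obtain ⟨h1, h2⟩ := hUsub (e α).2
    constructor
    · rintro x (hx | rfl)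
      · exact h1 x hx
      · exact α.2
    · refine lt_of_le_of_lt (Cardinal.mk_union_le _ _) ?_
      rw [Cardinal.mk_singleton]
      have hk0' : (ℵ₀ : Cardinal.{1}) ≤ Cardinal.lift.{1} kap := by
        simpa using Cardinal.lift_le.{1}.2 hk0
      exact Cardinal.add_lt_of_lt hk0' h2 (lt_of_lt_of_le Cardinal.one_lt_aleph0 hk0')
  -- pick b_α ∈ S containing a_α ∪ {α}
  have hbex : ∀ α : ↥(Set.Iio lam.ord), ∃ b ∈ S,
      ((e α : Set Ordinal.{0}) ∪ {(α : Ordinal)}) ⊆ b :=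
    fun α => aux_exists_superset_mem lam kap hk0 hkl S hSstat _ (hcsmall α)
  choose b hbS hbsup using hbex
  -- pick g(α) outside b_α
  have hgex : ∀ α : ↥(Set.Iio lam.ord), ∃ y, y < lam.ord ∧ y ∉ b α := by
    intro α
    by_contra h
    push_neg at h
    have hsub : Set.Iio lam.ord ⊆ b α := fun y hy => h y hy
    have hle : Cardinal.mk ↥(Set.Iio lam.ord) ≤ Cardinal.mk ↥(b α) :=
      Cardinal.mk_le_mk_of_subset hsub
    rw [Ordinal.mk_Iio_ordinal, Cardinal.card_ord] at hle
    have hlt : Cardinal.mk ↥(b α) < Cardinal.lift.{1} kap := (hSsub (hbS α)).2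
    have : Cardinal.lift.{1} lam < Cardinal.lift.{1} kap := lt_of_le_of_lt hle hlt
    rw [Cardinal.lift_lt] at this
    exact absurd hkl (not_le_of_gt this)
  choose gval hgval hgnot using hgex
  set g : Ordinal.{0} → Ordinal.{0} :=
    fun ξ => if h : ξ < lam.ord then gval ⟨ξ, h⟩ else 0 with hg
  have hgpos : ∀ ξ (h : ξ < lam.ord), g ξ = gval ⟨ξ, h⟩ := fun ξ h => dif_pos h
  refine ⟨Set.range b, ?_, ?_, ?_⟩
  · rintro _ ⟨α, rfl⟩; exact hbS α
  · -- unbounded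
    intro d hd
    obtain ⟨u, huU, hdu⟩ := hUunb d hd
    refine ⟨b (e.symm ⟨u, huU⟩), ⟨_, rfl⟩, ?_⟩
    refine hdu.trans (subset_trans ?_ (subset_trans (Set.subset_union_left)
      (hbsup (e.symm ⟨u, huU⟩))))
    rw [e.apply_symm_apply]
  · -- not stationary: disjoint from the club of g-closed sets
    intro hst
    have hfam : FamOn lam ({⟨1, fun x => g (x 0)⟩} : Set FinFun) := by
      rintro f rfl x hx
      show g (x 0) < lam.ord
      rw [hgpos _ (hx 0)]
      exact hgval _
    obtain ⟨x, ⟨α, rfl⟩, hxC⟩ := hst _ ⟨_, Set.countable_singleton _, hfam, rfl⟩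
    have hαb : (α : Ordinal) ∈ b α := hbsup α (Set.mem_union_right _ rfl)
    have h2 := hxC.2.1 ⟨1, fun x => g (x 0)⟩ rfl (fun _ => (α : Ordinal)) (fun _ => hαb)
    have h3 : g (α : Ordinal) ∈ b α := h2
    rw [hgpos _ α.2] at h3
    exact hgnot α h3
end
end
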